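/- Let R > 0, p, m ≥ 1, let a₁, …, a_m ∈ ℝ^p with ‖a_i‖ ≤ 1 for all i, let X = {x ∈ ℝ^p : ‖x‖ ≤ R}, let x* ∈ X, let σ(α) = e^α/(1 + e^α) be the logistic function, set b_i = σ(⟨a_i, x*⟩), and define f(x) = (1/(2m)) Σ_{i=1}^m (σ(⟨a_i, x⟩) − b_i)². Then, with κ = min(1, 8σ′(R)), f is κ-quasar-convex on X with respect to x*: f(x*) ≥ f(x) + (1/κ)⟨∇f(x), x* − x⟩ for all x ∈ X. -/

import Mathlib

open RealInnerProductSpace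

/-- Auxiliary: the logistic derivative is positive and at most 1/4. -/
lemma logistic_deriv_bounds (c : ℝ) :
    0 < Real.exp c / (1 + Real.exp c)^2 ∧ Real.exp c / (1 + Real.exp c)^2 ≤ 1/4 := by
  have h := Real.exp_pos c
  constructor
  · positivity
  · rw [div_le_iff₀ (by positivity)]
    nlinarith [sq_nonneg (1 - Real.exp c)]

/-- Auxiliary: derivative of the logistic function. -/
lemma logistic_hasDerivAt (σ : ℝ → ℝ) (hσ : ∀ α : ℝ, σ α = Real.exp α / (1 + Real.exp α))
    (α : ℝ) : HasDerivAt σ (Real.exp α / (1 + Real.exp α)^2) α := by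
  have hσe : σ = fun α => Real.exp α / (1 + Real.exp α) := funext hσ
  rw [hσe]
  have hpos : (1 : ℝ) + Real.exp α ≠ 0 := by positivity
  have h := (Real.hasDerivAt_exp α).div ((hasDerivAt_const α (1:ℝ)).add (Real.hasDerivAt_exp α))
    hpos
  refine h.congr_deriv ?_
  simp only [Pi.add_apply]
  ring

/-- Auxiliary MVT consequence: `4 (σ t - σ s)^2 ≤ (σ t - σ s)(t - s)` for `a < b` version. -/
lemma logistic_mvt_aux (σ : ℝ → ℝ) (hσ : ∀ α : ℝ, σ α = Real.exp α / (1 + Real.exp α))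
    {s t : ℝ} (hst : s < t) : 4 * (σ t - σ s)^2 ≤ (σ t - σ s) * (t - s) := by
  obtain ⟨c, _, hc⟩ := exists_hasDerivAt_eq_slope σ
    (fun α => Real.exp α / (1 + Real.exp α)^2) hst
    (continuousOn_of_forall_continuousAt fun x _ => (logistic_hasDerivAt σ hσ x).continuousAt)
    (fun x _ => logistic_hasDerivAt σ hσ x)
  have heq : σ t - σ s = (Real.exp c / (1 + Real.exp c)^2) * (t - s) := by
    rw [hc, div_mul_cancel₀ _ (sub_ne_zero.2 hst.ne')]
  obtain ⟨h0, h4⟩ := logistic_deriv_bounds c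
  rw [heq]
  nlinarith [sq_nonneg (t - s)]

lemma logistic_mvt (σ : ℝ → ℝ) (hσ : ∀ α : ℝ, σ α = Real.exp α / (1 + Real.exp α))
    (s t : ℝ) : 4 * (σ t - σ s)^2 ≤ (σ t - σ s) * (t - s) := by
  rcases lt_trichotomy s t with h | h | h
  · exact logistic_mvt_aux σ hσ h
  · simp [h]
  · have := logistic_mvt_aux σ hσ h
    nlinarith

/-- Auxiliary: the logistic derivative is decreasing in `|α|`. -/
lemma logistic_deriv_mono {t R : ℝ} (ht : |t| ≤ R) :
    Real.exp R / (1 + Real.exp R)^2 ≤ Real.exp t / (1 + Real.exp t)^2 := by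
  have h1 : t ≤ R := le_of_abs_le ht
  have h2 : -R ≤ t := neg_le_of_abs_le ht
  have hu : Real.exp t ≤ Real.exp R := Real.exp_le_exp.2 h1
  have huv : 1 ≤ Real.exp t * Real.exp R := by
    rw [← Real.exp_add]
    have : (0:ℝ) ≤ t + R := by linarith
    calc (1:ℝ) = Real.exp 0 := Real.exp_zero.symm
    _ ≤ Real.exp (t + R) := Real.exp_le_exp.2 this
  have hep := Real.exp_pos t
  have heq := Real.exp_pos R
  rw [div_le_div_iff₀ (by positivity) (by positivity)]
  nlinarith [mul_nonneg (sub_nonneg.2 hu) (sub_nonneg.2 huv)]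

/-- The GLM loss with logistic link σ and realizable labels b_i = σ(⟨a_i, x*⟩), with
‖a_i‖ ≤ 1 and over the ball X = {‖x‖ ≤ R}, is κ-quasar-convex with respect to x*
with κ = min(1, 8σ′(R)). -/
theorem glm_logistic_quasar_convex
    (R : ℝ) (hR : 0 < R)
    (p m : ℕ) (hp : 1 ≤ p) [NeZero m]
    (a : Fin m → EuclideanSpace ℝ (Fin p)) (ha : ∀ i, ‖a i‖ ≤ 1)
    (X : Set (EuclideanSpace ℝ (Fin p)))
    (hX : X = {x : EuclideanSpace ℝ (Fin p) | ‖x‖ ≤ R})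
    (xstar : EuclideanSpace ℝ (Fin p)) (hxstar : xstar ∈ X)
    (σ : ℝ → ℝ) (hσ : ∀ α : ℝ, σ α = Real.exp α / (1 + Real.exp α))
    (b : Fin m → ℝ) (hb : ∀ i, b i = σ ⟪a i, xstar⟫)
    (f : EuclideanSpace ℝ (Fin p) → ℝ)
    (hf : ∀ z, f z = (1 / (2 * (m : ℝ))) * ∑ i : Fin m, (σ ⟪a i, z⟫ - b i)^2)
    (κ : ℝ) (hκ : κ = min 1 (8 * deriv σ R)) :
    ∀ x ∈ X, f x + (1/κ) * ⟪gradient f x, xstar - x⟫ ≤ f xstar := by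
  intro x hx
  -- notation
  have hσd := logistic_hasDerivAt σ hσ
  set σ' : ℝ → ℝ := fun α => Real.exp α / (1 + Real.exp α)^2 with hσ'def
  -- deriv σ R
  have hderivR : deriv σ R = σ' R := (hσd R).deriv
  have hσ'Rpos : 0 < σ' R := (logistic_deriv_bounds R).1
  -- κ facts
  have hκpos : 0 < κ := by
    rw [hκ, hderivR]; exact lt_min one_pos (by positivity)
  have hκle : κ ≤ 8 * σ' R := by rw [hκ, hderivR]; exact min_le_right _ _
  -- inner products
  set t : Fin m → ℝ := fun i => ⟪a i, x⟫ with ht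
  set s : Fin m → ℝ := fun i => ⟪a i, xstar⟫ with hs
  have htR : ∀ i, |t i| ≤ R := by
    intro i
    calc |t i| ≤ ‖a i‖ * ‖x‖ := abs_real_inner_le_norm (a i) x
    _ ≤ 1 * R := by
        apply mul_le_mul (ha i) _ (norm_nonneg _) zero_le_one
        rw [hX] at hx; exact hx
    _ = R := one_mul R
  -- the gradient
  set G : EuclideanSpace ℝ (Fin p) := (1 / (2 * (m : ℝ))) • ∑ i : Fin m,
      ((2 * (σ (t i) - b i)) * σ' (t i)) • a i with hGdef
  have hgrad : HasGradientAt f G x := by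
    rw [hasGradientAt_iff_hasFDerivAt]
    have hterm : ∀ i : Fin m, HasFDerivAt (fun z : EuclideanSpace ℝ (Fin p) => (σ ⟪a i, z⟫ - b i)^2)
        ((2 * (σ (t i) - b i)) • (σ' (t i) • innerSL ℝ (a i))) x := by
      intro i
      have h1 : HasFDerivAt (fun z : EuclideanSpace ℝ (Fin p) => ⟪a i, z⟫) (innerSL ℝ (a i)) x :=
        (innerSL ℝ (a i)).hasFDerivAt
      have h2 : HasFDerivAt (fun z : EuclideanSpace ℝ (Fin p) => σ ⟪a i, z⟫) (σ' (t i) • innerSL ℝ (a i)) x :=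
        (hσd (t i)).comp_hasFDerivAt x h1
      have h3 := (h2.sub_const (b i)).mul (h2.sub_const (b i))
      refine (h3.congr_of_eventuallyEq (Filter.Eventually.of_forall fun z => ?_)).congr_fderiv ?_
      · simp only [Pi.mul_apply]; ring
      · ext y
        simp only [ContinuousLinearMap.smul_apply, ContinuousLinearMap.add_apply,
          ContinuousLinearMap.smul_apply, smul_eq_mul]
        ring
    have hsum := HasFDerivAt.sum (fun i (_ : i ∈ Finset.univ) => hterm i)
    have hmul := hsum.const_mul (1 / (2 * (m : ℝ)))
    have hfd : HasFDerivAt f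
        ((1 / (2 * (m : ℝ))) • ∑ i : Fin m,
          (2 * (σ (t i) - b i)) • (σ' (t i) • innerSL ℝ (a i))) x :=
      hmul.congr_of_eventuallyEq (Filter.Eventually.of_forall fun z => by simp only [hf z, Finset.sum_apply])
    refine hfd.congr_fderiv ?_
    ext y
    rw [InnerProductSpace.toDual_apply_apply, hGdef]
    simp only [ContinuousLinearMap.smul_apply, ContinuousLinearMap.sum_apply,
      real_inner_smul_left, sum_inner, innerSL_apply_apply, smul_eq_mul]
    congr 1
    apply Finset.sum_congr rfl
    intro i _
    ring
  have hgradeq : gradient f x = G := hgrad.gradient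
  -- inner product with direction
  have hinner : ⟪G, xstar - x⟫ =
      (1 / (2 * (m : ℝ))) * ∑ i : Fin m,
        ((2 * (σ (t i) - b i)) * σ' (t i)) * (s i - t i) := by
    rw [hGdef, real_inner_smul_left, sum_inner]
    congr 1
    apply Finset.sum_congr rfl
    intro i _
    rw [real_inner_smul_left, inner_sub_right]
  -- f xstar = 0
  have hfstar : f xstar = 0 := by
    rw [hf]
    have : ∀ i : Fin m, (σ ⟪a i, xstar⟫ - b i)^2 = 0 := by
      intro i; rw [hb i]; ring
    rw [Finset.sum_congr rfl fun i _ => this i]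
    simp
  -- main estimate
  rw [hgradeq, hinner, hfstar, hf]
  have hcomb : (1 / (2 * (m : ℝ))) * ∑ i : Fin m, (σ ⟪a i, x⟫ - b i)^2 +
      (1/κ) * ((1 / (2 * (m : ℝ))) * ∑ i : Fin m,
        ((2 * (σ (t i) - b i)) * σ' (t i)) * (s i - t i)) =
      (1 / (2 * (m : ℝ))) * ∑ i : Fin m,
        ((σ (t i) - b i)^2 + (1/κ) * (((2 * (σ (t i) - b i)) * σ' (t i)) * (s i - t i))) := by
    rw [Finset.sum_add_distrib, ← Finset.mul_sum]
    ring
  rw [hcomb]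
  apply mul_nonpos_of_nonneg_of_nonpos (by positivity)
  apply Finset.sum_nonpos
  intro i _
  -- pointwise inequality
  have hbi : b i = σ (s i) := hb i
  rw [hbi]
  set u : ℝ := σ (t i) - σ (s i) with hu
  have hmvt : 4 * u^2 ≤ u * (t i - s i) := logistic_mvt σ hσ (s i) (t i)
  have hσ't : σ' R ≤ σ' (t i) := logistic_deriv_mono (htR i)
  have hσ'pos : 0 < σ' (t i) := (logistic_deriv_bounds (t i)).1
  have hkey : κ * u^2 + 2 * σ' (t i) * u * (s i - t i) ≤ 0 := by
    nlinarith [sq_nonneg u, mul_le_mul_of_nonneg_left hmvt (le_of_lt hσ'pos),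
      mul_le_mul_of_nonneg_right hκle (sq_nonneg u)]
  have hrw : u^2 + (1/κ) * ((2 * u * σ' (t i)) * (s i - t i)) =
      (κ * u^2 + 2 * σ' (t i) * u * (s i - t i)) / κ := by
    field_simp
  rw [hrw]
  exact div_nonpos_of_nonpos_of_nonneg hkey hκpos.le
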